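/- Let g be an invertible symmetric 4×4 real matrix, ζ ∈ ℝ⁴ and W ∈ ℝ⁴ with Ω² = 1 + ζᵀW > 0. Then T(ζ, W, g) is invertible and its inverse is the matrix Ω⁻²·( g⁻¹ + (Wᵀg⁻¹W)·ζζᵀ + ζ(g⁻¹W)ᵀ + (g⁻¹W)ζᵀ ); equivalently, T(ζ, W, g) multiplied by this matrix equals the identity. -/

import Mathlib

open Matrix

variable {n : ℕ}

lemma mul_vecMulVec' (A : Matrix (Fin n) (Fin n) ℝ) (a b : Fin n → ℝ) :
    A * vecMulVec a b = vecMulVec (A *ᵥ a) b := by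
  ext i j
  simp [Matrix.mul_apply, vecMulVec_apply, Matrix.mulVec, dotProduct, Finset.sum_mul, mul_assoc]

lemma vecMulVec_mul' (a b : Fin n → ℝ) (A : Matrix (Fin n) (Fin n) ℝ) :
    vecMulVec a b * A = vecMulVec a (b ᵥ* A) := by
  ext i j
  simp [Matrix.mul_apply, vecMulVec_apply, Matrix.vecMul, dotProduct, Finset.mul_sum, mul_assoc]

lemma vecMulVec_mul_vecMulVec' (a b c d : Fin n → ℝ) :
    vecMulVec a b * vecMulVec c d = (b ⬝ᵥ c) • vecMulVec a d := by
  ext i j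
  simp only [Matrix.mul_apply, vecMulVec_apply, dotProduct, Matrix.smul_apply, smul_eq_mul,
    Finset.sum_mul]
  apply Finset.sum_congr rfl
  intros; ring

lemma vecMulVec_mulVec' (a b c : Fin n → ℝ) :
    vecMulVec a b *ᵥ c = (b ⬝ᵥ c) • a := by
  ext i
  simp [Matrix.mulVec, vecMulVec_apply, dotProduct, Finset.mul_sum, Finset.sum_mul, mul_assoc,
    mul_comm, mul_left_comm]

lemma smul_vecMulVec' (k : ℝ) (a b : Fin n → ℝ) :
    vecMulVec (k • a) b = k • vecMulVec a b := by
  ext i j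
  simp [vecMulVec_apply, mul_assoc]

/-- The transformation `T(ζ, W, g) = Ω²·g − (gζ)Wᵀ − W(gζ)ᵀ − (λ/Ω²)·W Wᵀ`
with `Ω² = 1 + ζᵀW` and `λ = −ζᵀgζ`. -/
noncomputable def ehlersT {n : ℕ} (ζ W : Fin n → ℝ) (g : Matrix (Fin n) (Fin n) ℝ) :
    Matrix (Fin n) (Fin n) ℝ :=
  (1 + ζ ⬝ᵥ W) • g - vecMulVec (g *ᵥ ζ) W - vecMulVec W (g *ᵥ ζ)
    - ((-(ζ ⬝ᵥ g *ᵥ ζ)) / (1 + ζ ⬝ᵥ W)) • vecMulVec W W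

/-- **Inverse of the transformed metric:** for an invertible symmetric `4 × 4`
real matrix `g` and `Ω² = 1 + ζᵀW > 0`, the matrix `T(ζ, W, g)` is invertible with
inverse `Ω⁻²·(g⁻¹ + (Wᵀg⁻¹W)·ζζᵀ + ζ(g⁻¹W)ᵀ + (g⁻¹W)ζᵀ)`. -/
theorem ehlersT_inv (g : Matrix (Fin 4) (Fin 4) ℝ) (hg : g.IsSymm)
    (hginv : IsUnit g.det) (ζ W : Fin 4 → ℝ) (hΩ : 0 < 1 + ζ ⬝ᵥ W) :
    IsUnit (ehlersT ζ W g).det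
    ∧ ehlersT ζ W g *
        ((1 + ζ ⬝ᵥ W)⁻¹ • (g⁻¹ + (W ⬝ᵥ g⁻¹ *ᵥ W) • vecMulVec ζ ζ
          + vecMulVec ζ (g⁻¹ *ᵥ W) + vecMulVec (g⁻¹ *ᵥ W) ζ)) = 1
    ∧ (ehlersT ζ W g)⁻¹
        = (1 + ζ ⬝ᵥ W)⁻¹ • (g⁻¹ + (W ⬝ᵥ g⁻¹ *ᵥ W) • vecMulVec ζ ζ
          + vecMulVec ζ (g⁻¹ *ᵥ W) + vecMulVec (g⁻¹ *ᵥ W) ζ) := by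
  set s := 1 + ζ ⬝ᵥ W with hs_def
  have hs : s ≠ 0 := ne_of_gt hΩ
  have hgh : g * g⁻¹ = 1 := Matrix.mul_nonsing_inv g hginv
  have hhg : g⁻¹ * g = 1 := Matrix.nonsing_inv_mul g hginv
  have hinvsymm : (g⁻¹)ᵀ = g⁻¹ := by
    rw [Matrix.transpose_nonsing_inv, hg.eq]
  have hu : g *ᵥ (g⁻¹ *ᵥ W) = W := by
    rw [Matrix.mulVec_mulVec, hgh, Matrix.one_mulVec]
  have hWg : W ᵥ* g⁻¹ = g⁻¹ *ᵥ W := by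
    rw [← Matrix.mulVec_transpose, hinvsymm]
  have hzg : (g *ᵥ ζ) ᵥ* g⁻¹ = ζ := by
    rw [← Matrix.mulVec_transpose, hinvsymm, Matrix.mulVec_mulVec, hhg, Matrix.one_mulVec]
  have hd1 : (g *ᵥ ζ) ⬝ᵥ (g⁻¹ *ᵥ W) = ζ ⬝ᵥ W := by
    rw [Matrix.dotProduct_mulVec, hzg]
  have hd2 : (g *ᵥ ζ) ⬝ᵥ ζ = ζ ⬝ᵥ (g *ᵥ ζ) := dotProduct_comm _ _
  have hd3 : W ⬝ᵥ ζ = ζ ⬝ᵥ W := dotProduct_comm _ _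
  set N : Matrix (Fin 4) (Fin 4) ℝ :=
    g⁻¹ + (W ⬝ᵥ g⁻¹ *ᵥ W) • vecMulVec ζ ζ
      + vecMulVec ζ (g⁻¹ *ᵥ W) + vecMulVec (g⁻¹ *ᵥ W) ζ with hN_def
  have hsT : s • ehlersT ζ W g
      = (s * s) • g - s • vecMulVec (g *ᵥ ζ) W - s • vecMulVec W (g *ᵥ ζ)
        - (-(ζ ⬝ᵥ g *ᵥ ζ)) • vecMulVec W W := by
    rw [ehlersT, ← hs_def, smul_sub, smul_sub, smul_sub, smul_smul, smul_smul]
    congr 2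
    field_simp
  have key : ehlersT ζ W g * N = s • 1 := by
    apply smul_right_injective _ hs
    show s • (ehlersT ζ W g * N) = s • s • (1 : Matrix (Fin 4) (Fin 4) ℝ)
    rw [← smul_mul_assoc, hsT, hN_def]
    simp only [Matrix.sub_mul, Matrix.mul_add, smul_mul_assoc, mul_smul_comm,
      vecMulVec_mul_vecMulVec', mul_vecMulVec', vecMulVec_mul', vecMulVec_mulVec', smul_vecMulVec',
      hgh, hu, hWg, hzg, hd1, hd2, hd3, smul_smul]
    module
  have h2 : ehlersT ζ W g * (s⁻¹ • N) = 1 := by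
    rw [mul_smul_comm, key, smul_smul, inv_mul_cancel₀ hs, one_smul]
  have hdet : IsUnit (ehlersT ζ W g).det := by
    have := congrArg Matrix.det h2
    rw [Matrix.det_mul, Matrix.det_one] at this
    exact IsUnit.of_mul_eq_one _ this
  exact ⟨hdet, h2, Matrix.inv_eq_right_inv h2⟩
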